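/- arXiv:1905.03091 — 2 statements merged into one kernel-verified Lean document; each statement's English description precedes it below -/
import Mathlib

section
/- Let p be a prime, F a field of characteristic p, and x an element of a commutative F-algebra with x^p = 1. Then x^(-1) · (1 - x^(-1))^(p-2) = \sum_{j=1}^{p-1} j · x^(-j). -/
open Polynomial Finset in
theorem poly_id_aux (p : ℕ) (hp : p.Prime) :
    (X : Polynomial (ZMod p)) * (1 - X) ^ (p - 2) =
      ∑ j ∈ Icc 1 (p - 1), (j : Polynomial (ZMod p)) * X ^ j := by
  haveI : Fact p.Prime := ⟨hp⟩
  set R := Polynomial (ZMod p)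
  have h2 : 2 ≤ p := hp.two_le
  have hX1 : (X : R) ≠ 1 := fun h => Polynomial.X_ne_C (1 : ZMod p) (by rw [h, map_one])
  have hX : (1 : R) - X ≠ 0 := sub_ne_zero.mpr hX1.symm
  apply mul_right_cancel₀ hX
  have hgeom : ((1 : R) - X) ^ (p - 1) = ∑ j ∈ range p, (X : R) ^ j := by
    apply mul_right_cancel₀ hX
    rw [← pow_succ, Nat.sub_add_cancel (by omega)]
    have : ((1 : R) - X) ^ p = 1 - X ^ p := by
      rw [sub_pow_char, one_pow]
    rw [this]
    have := geom_sum_mul (X : R) p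
    calc (1 : R) - X ^ p = -((X : R) ^ p - 1) := by ring
    _ = -((∑ j ∈ range p, (X : R) ^ j) * (X - 1)) := by rw [this]
    _ = (∑ j ∈ range p, (X : R) ^ j) * (1 - X) := by ring
  have hp0 : ((p : R)) = 0 := by exact_mod_cast CharP.cast_eq_zero R p
  have hL : (X : R) * (1 - X) ^ (p - 2) * (1 - X) = ∑ j ∈ range p, (X : R) ^ (j + 1) := by
    rw [mul_assoc, ← pow_succ, show p - 2 + 1 = p - 1 by omega, hgeom, Finset.mul_sum]
    simp [pow_succ, mul_comm]
  rw [hL]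
  have hre : (∑ j ∈ Icc 1 (p - 1), (j : R) * X ^ j) =
      ∑ i ∈ range (p - 1), ((i + 1 : ℕ) : R) * X ^ (i + 1) := by
    rw [← Finset.Ico_add_one_right_eq_Icc, show p - 1 + 1 = p by omega, Finset.sum_Ico_eq_sum_range]
    simp [add_comm]
  rw [hre, Finset.sum_mul]
  have key : ∀ i : ℕ, ((i + 1 : ℕ) : R) * X ^ (i + 1) * (1 - X) =
      (((i + 1 : ℕ) : R) * X ^ (i + 1) - ((i + 2 : ℕ) : R) * X ^ (i + 2)) + X ^ (i + 2) := by
    intro i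
    have e1 : ((i + 1 : ℕ) : R) = (i : R) + 1 := @Nat.cast_succ (ZMod p)[X] _ i
    have e2 : ((i + 2 : ℕ) : R) = (i : R) + 1 + 1 := by
      rw [← e1]; exact @Nat.cast_succ (ZMod p)[X] _ (i + 1)
    rw [e1, e2]
    ring
  rw [Finset.sum_congr rfl fun i _ => key i, Finset.sum_add_distrib,
    Finset.sum_range_sub' (fun n => ((n + 1 : ℕ) : R) * X ^ (n + 1)) (p - 1)]
  rw [show p - 1 + 1 = p by omega]
  rw [hp0]
  have hsplit : (∑ j ∈ range p, (X : R) ^ (j + 1)) =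
      (∑ i ∈ range (p - 1), (X : R) ^ (i + 1 + 1)) + X ^ (0 + 1) := by
    rw [← Finset.sum_range_succ' (fun j => (X : R) ^ (j + 1)) (p - 1),
      show p - 1 + 1 = p by omega]
  rw [hsplit]
  simp only [zero_mul, sub_zero, Nat.cast_ofNat, Nat.cast_one, zero_add, pow_one,
    Nat.reduceAdd]
  rw [Nat.cast_one, one_mul, Finset.sum_congr rfl fun i _ => (by norm_num : (X:R) ^ (i+1+1) = X ^ (i+2))]
  ring

/-- If `F` is a field of characteristic `p` (a prime) and `x` is an element of a commutative
`F`-algebra with `x ^ p = 1` (so `x` is invertible with `x⁻¹ = x ^ (p - 1)`), then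
`x⁻¹ * (1 - x⁻¹) ^ (p - 2) = ∑_{j=1}^{p-1} j * x^{-j}`. -/
theorem stmt_2 (p : ℕ) (hp : p.Prime) (F : Type*) [Field F] [CharP F p]
    (A : Type*) [CommRing A] [Algebra F A] (x : A) (hx : x ^ p = 1) :
    x ^ (p - 1) * (1 - x ^ (p - 1)) ^ (p - 2) =
      ∑ j ∈ Finset.Icc 1 (p - 1), (j : A) * (x ^ (p - 1)) ^ j := by
  nontriviality A
  haveI : CharP A p := charP_of_injective_algebraMap
    (algebraMap F A).injective p
  set y : A := x ^ (p - 1) with hy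
  have h := congrArg (Polynomial.eval₂RingHom (ZMod.castHom (dvd_refl p) A) y)
    (poly_id_aux p hp)
  simpa [Polynomial.eval₂_finset_sum, Polynomial.eval₂_pow] using h
end

section
/- Let p be a prime, a ≥ 1, F a field of characteristic p, and R = F[λ_1,...,λ_a]/(λ_1^p,...,λ_a^p) with maximal ideal I, and L = a(p-1). Let J be the set of generators λ_1,...,λ_a. For every 0 ≤ k ≤ L-1, the map I^{L-k-1}/I^{L-k} → ⊕_{i=1}^a I^{L-k}/I^{L-k+1} sending [x] to ([x·λ_1],...,[x·λ_a]) is injective. -/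
set_option synthInstance.maxHeartbeats 1000000


open MvPolynomial

section Aux

variable {a : ℕ} {F : Type*} [Field F]

local notation "M" => Ideal.span (Set.range (X : Fin a → MvPolynomial (Fin a) F))

lemma deg_add (d e : Fin a →₀ ℕ) :
    (d + e).sum (fun _ n => n) = d.sum (fun _ n => n) + e.sum (fun _ n => n) :=
  Finsupp.sum_add_index' (fun _ => rfl) (fun _ _ _ => rfl)

/-- The ideal of polynomials all of whose monomials have degree ≥ n. -/
noncomputable def Did (n : ℕ) (a : ℕ) (F : Type*) [Field F] : Ideal (MvPolynomial (Fin a) F) :=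
  Ideal.span ((fun s => monomial s (1 : F)) '' {s : Fin a →₀ ℕ | n ≤ s.sum (fun _ e => e)})

lemma mem_span_monomial_cond {P : (Fin a →₀ ℕ) → Prop}
    (hP : ∀ s d : Fin a →₀ ℕ, s ≤ d → P s → P d) {f : MvPolynomial (Fin a) F} :
    f ∈ Ideal.span ((fun s => monomial s (1 : F)) '' {s | P s}) ↔ ∀ d ∈ f.support, P d := by
  rw [mem_ideal_span_monomial_image]
  constructor
  · intro h d hd
    obtain ⟨s, hs, hsd⟩ := h d hd
    exact hP s d hsd hs
  · intro h d hd
    exact ⟨d, h d hd, le_rfl⟩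

lemma mem_Did {n : ℕ} {f : MvPolynomial (Fin a) F} :
    f ∈ Did n a F ↔ ∀ d ∈ f.support, n ≤ d.sum (fun _ e => e) := by
  classical
  refine mem_span_monomial_cond (fun s d hsd hs => hs.trans ?_)
  exact Finsupp.sum_le_sum_index hsd (fun _ _ => monotone_id) (fun _ _ => rfl)

lemma monomial_mem_pow (d : Fin a →₀ ℕ) (c : F) :
    monomial d c ∈ M ^ (d.sum fun _ n => n) := by
  induction d using Finsupp.induction with
  | zero => simp
  | single_add i b f hif hb ih =>
      rw [monomial_single_add, deg_add]
      rw [Finsupp.sum_single_index (by rfl)]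
      rw [pow_add]
      exact Ideal.mul_mem_mul (Ideal.pow_mem_pow (Ideal.subset_span (Set.mem_range_self i)) b) ih

lemma pow_le_Did (n : ℕ) : (M ^ n : Ideal (MvPolynomial (Fin a) F)) ≤ Did n a F := by
  classical
  induction n with
  | zero =>
      intro f _
      rw [mem_Did]; intro d _; exact Nat.zero_le _
  | succ n ih =>
      rw [pow_succ]
      refine Ideal.mul_le.2 fun g hg h hh => ?_
      rw [mem_Did]
      intro d hd
      have := support_mul g h hd
      rw [Finset.mem_add] at this
      obtain ⟨d1, hd1, d2, hd2, rfl⟩ := this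
      have h1 := mem_Did.1 (ih hg) d1 hd1
      have h2 : 1 ≤ d2.sum (fun _ e => e) := by
        have := (mem_ideal_span_X_image (s := (Set.univ : Set (Fin a)))).1
          (by rwa [Set.image_univ]) d2 hd2
        obtain ⟨i, -, hi⟩ := this
        calc 1 ≤ d2 i := Nat.one_le_iff_ne_zero.2 hi
        _ ≤ d2.sum (fun _ e => e) := by
            rw [Finsupp.sum]
            exact Finset.single_le_sum (fun _ _ => Nat.zero_le _)
              (Finsupp.mem_support_iff.2 hi)
      rw [deg_add]; omega

lemma Did_le_pow (n : ℕ) : Did n a F ≤ (M ^ n : Ideal (MvPolynomial (Fin a) F)) := by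
  rw [Did, Ideal.span_le]
  rintro _ ⟨s, hs, rfl⟩
  exact Ideal.pow_le_pow_right hs (monomial_mem_pow s 1)

end Aux
section Aux2

variable {a p : ℕ} {F : Type*} [Field F]

local notation "M" => Ideal.span (Set.range (X : Fin a → MvPolynomial (Fin a) F))
local notation "Jp" => Ideal.span (Set.range fun i : Fin a => (X i : MvPolynomial (Fin a) F) ^ p)

/-- The combined monomial ideal: degree ≥ n, or some exponent ≥ p. -/
noncomputable def Kid (p n : ℕ) (a : ℕ) (F : Type*) [Field F] : Ideal (MvPolynomial (Fin a) F) :=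
  Ideal.span ((fun s => monomial s (1 : F)) ''
    {s : Fin a →₀ ℕ | n ≤ s.sum (fun _ e => e) ∨ ∃ i, p ≤ s i})

lemma mem_Kid {n : ℕ} {f : MvPolynomial (Fin a) F} :
    f ∈ Kid p n a F ↔ ∀ d ∈ f.support, n ≤ d.sum (fun _ e => e) ∨ ∃ i, p ≤ d i := by
  classical
  refine mem_span_monomial_cond (fun s d hsd hs => ?_)
  rcases hs with h1 | ⟨i, hi⟩
  · exact Or.inl (h1.trans
      (Finsupp.sum_le_sum_index hsd (fun _ _ => monotone_id) (fun _ _ => rfl)))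
  · exact Or.inr ⟨i, hi.trans (hsd i)⟩

lemma Kid_eq_sup (n : ℕ) : Kid p n a F = (M ^ n : Ideal (MvPolynomial (Fin a) F)) ⊔ Jp := by
  apply le_antisymm
  · rw [Kid, Ideal.span_le]
    rintro _ ⟨s, hs, rfl⟩
    rcases hs with h1 | ⟨i, hi⟩
    · exact Ideal.mem_sup_left (Ideal.pow_le_pow_right h1 (monomial_mem_pow s 1))
    · refine Ideal.mem_sup_right ?_
      have heq : s = Finsupp.single i p + (s - Finsupp.single i p) := by
        ext j
        simp only [Finsupp.add_apply, Finsupp.tsub_apply, Finsupp.single_apply]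
        by_cases h : i = j
        · subst h; simp; omega
        · simp [h]
      rw [heq]
      simp only [monomial_single_add]
      exact Ideal.mul_mem_right _ _ (Ideal.subset_span ⟨i, rfl⟩)
  · refine sup_le ?_ ?_
    · intro f hf
      rw [mem_Kid]
      intro d hd
      exact Or.inl (mem_Did.1 (pow_le_Did n hf) d hd)
    · classical
      rw [Ideal.span_le]
      rintro _ ⟨i, rfl⟩
      simp only [SetLike.mem_coe, X_pow_eq_monomial, mem_Kid]
      intro d hd
      rw [support_monomial, if_neg one_ne_zero, Finset.mem_singleton] at hd
      subst hd
      exact Or.inr ⟨i, by simp⟩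

/-- The key coefficient computation. -/
lemma key_step (hp : 2 ≤ p) (ha : 1 ≤ a) {m : ℕ} (hm : 1 ≤ m) (hmL : m ≤ a * (p - 1))
    {f : MvPolynomial (Fin a) F} (hf : f ∈ Kid p (m - 1) a F)
    (hmul : ∀ i : Fin a, f * X i ∈ Kid p (m + 1) a F) : f ∈ Kid p m a F := by
  rw [mem_Kid]
  intro d hd
  by_contra hcon
  push_neg at hcon
  obtain ⟨hdeg, hexp⟩ := hcon
  have hd1 := mem_Kid.1 hf d hd
  have hdeg' : d.sum (fun _ e => e) = m - 1 := by
    rcases hd1 with h | ⟨i, hi⟩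
    · omega
    · exact absurd hi (by have := hexp i; omega)
  -- all exponents < p, and not all equal to p - 1
  have hlt : ∀ i, d i ≤ p - 1 := fun i => by have := hexp i; omega
  have hsum_eq : d.sum (fun _ e => e) = ∑ i : Fin a, d i := by
    rw [Finsupp.sum_fintype]
    intro _; rfl
  have hex : ∃ i, d i ≤ p - 2 := by
    by_contra hall
    push_neg at hall
    have : ∀ i, d i = p - 1 := fun i => by have h1 := hlt i; have h2 := hall i; omega
    have : (∑ i : Fin a, d i) = a * (p - 1) := by
      rw [Finset.sum_congr rfl (fun i _ => this i)]
      simp [Finset.sum_const, mul_comm]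
    omega
  obtain ⟨i, hi⟩ := hex
  -- look at the coefficient of d + single i 1 in f * X i
  have hcoeff : (f * X i).coeff (d + Finsupp.single i 1) = f.coeff d := coeff_mul_X d i f
  have hdsup : d + Finsupp.single i 1 ∈ (f * X i).support := by
    rw [mem_support_iff, hcoeff]
    exact mem_support_iff.1 hd
  have := mem_Kid.1 (hmul i) _ hdsup
  rcases this with h | ⟨j, hj⟩
  · rw [deg_add] at h
    rw [Finsupp.sum_single_index (by rfl)] at h
    omega
  · rw [Finsupp.add_apply, Finsupp.single_apply] at hj
    by_cases hij : i = j
    · subst hij; simp at hj; omega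
    · rw [if_neg hij] at hj
      have := hlt j; omega

end Aux2


/-- Let `p` be prime, `a ≥ 1`, `F` a field of characteristic `p`,
`R = F[λ_1, …, λ_a]/(λ_1^p, …, λ_a^p)` with maximal ideal `I`, and `L = a(p-1)`.  For every
`0 ≤ k ≤ L - 1`, the map `I^{L-k-1}/I^{L-k} → ⊕_{i=1}^a I^{L-k}/I^{L-k+1}` induced by
`x ↦ ([x·λ_1], …, [x·λ_a])` is injective; elementwise: if `x ∈ I^{L-k-1}` and
`x·λ_i ∈ I^{L-k+1}` for every `i`, then `x ∈ I^{L-k}`. -/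
theorem stmt_10 (p a : ℕ) (hp : p.Prime) (ha : 1 ≤ a) (F : Type*) [Field F] [CharP F p]
    (k : ℕ) (hk : k ≤ a * (p - 1) - 1)
    (J : Ideal (MvPolynomial (Fin a) F))
    (hJ : J = Ideal.span (Set.range fun i : Fin a => MvPolynomial.X i ^ p))
    (lam : Fin a → (MvPolynomial (Fin a) F ⧸ J))
    (hlam : ∀ i, lam i = Ideal.Quotient.mk J (MvPolynomial.X i))
    (I : Ideal (MvPolynomial (Fin a) F ⧸ J))
    (hI : I = Ideal.span (Set.range lam)) :
    ∀ x : MvPolynomial (Fin a) F ⧸ J, x ∈ I ^ (a * (p - 1) - k - 1) →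
      (∀ i : Fin a, x * lam i ∈ I ^ (a * (p - 1) - k + 1)) →
      x ∈ I ^ (a * (p - 1) - k) := by
  intro x hx hmul
  have hp2 : 2 ≤ p := hp.two_le
  have hL1 : 1 ≤ a * (p - 1) := Nat.one_le_iff_ne_zero.2 (by
    apply Nat.mul_ne_zero <;> omega)
  set L := a * (p - 1) with hLdef
  set m := L - k with hmdef
  have hm1 : 1 ≤ m := by omega
  have hmL : m ≤ L := Nat.sub_le _ _
  -- express I as the image of the span of the variables
  have hlam' : lam = fun i => Ideal.Quotient.mk J (MvPolynomial.X i) := funext hlam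
  have hI' : I = Ideal.map (Ideal.Quotient.mk J)
      (Ideal.span (Set.range (MvPolynomial.X : Fin a → MvPolynomial (Fin a) F))) := by
    rw [hI, hlam', Ideal.map_span, ← Set.range_comp]
    rfl
  have hmem : ∀ (n : ℕ) (g : MvPolynomial (Fin a) F),
      Ideal.Quotient.mk J g ∈ I ^ n ↔ g ∈ Kid p n a F := by
    intro n g
    rw [hI', ← Ideal.map_pow, Kid_eq_sup, ← hJ]
    constructor
    · intro h
      have hc := Ideal.comap_map_of_surjective (Ideal.Quotient.mk J)
        Ideal.Quotient.mk_surjective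
        (Ideal.span (Set.range (MvPolynomial.X : Fin a → MvPolynomial (Fin a) F)) ^ n)
      have hg : g ∈ Ideal.comap (Ideal.Quotient.mk J) (Ideal.map (Ideal.Quotient.mk J)
          (Ideal.span (Set.range (MvPolynomial.X : Fin a → MvPolynomial (Fin a) F)) ^ n)) := h
      rw [hc] at hg
      rwa [← RingHom.ker_eq_comap_bot, Ideal.mk_ker] at hg
    · intro h
      obtain ⟨u, hu, v, hv, rfl⟩ := Submodule.mem_sup.1 h
      rw [map_add, Ideal.Quotient.eq_zero_iff_mem.2 hv, add_zero]
      exact Ideal.mem_map_of_mem _ hu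
  obtain ⟨f, rfl⟩ := Ideal.Quotient.mk_surjective x
  rw [hmem] at hx ⊢
  refine key_step hp2 ha hm1 hmL hx fun i => ?_
  have := hmul i
  rw [hlam i, ← map_mul, hmem] at this
  exact this
end
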